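/- For positive integers β and all n ≥ 0 (special case α = β, γ = 1 of the main theorem): ∑_{i=0}^n (−1)^{n−i} C((β−1)i+β, n−i) * (1/(βi+1)) * C(βi+1, i) = (−1)^n C(β−1, n). -/

import Mathlib

open Finset
namespace Stmt16Aux
noncomputable section

abbrev Y : Type := PowerSeries ℚ
abbrev P : Type := Polynomial ℚ
abbrev Tp : Type := Polynomial Y

lemma constCoeff_s : PowerSeries.constantCoeff (R := ℚ) (1 - PowerSeries.X) = 1 := by simp

def sU : Yˣ := (PowerSeries.isUnit_iff_constantCoeff.mpr
  (by rw [constCoeff_s]; exact isUnit_one)).unit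

lemma sU_val : (sU : Y) = 1 - PowerSeries.X := IsUnit.unit_spec _

def yy : Y := PowerSeries.X
def s : Y := 1 - PowerSeries.X
def vv : Y := ((sU⁻¹ : Yˣ) : Y)
def x₁ : Y := vv * yy

lemma hsv : s * vv = 1 := by
  rw [s, ← sU_val, vv, Units.mul_inv]

lemma s_x₁ : s * x₁ = yy := by
  rw [x₁, ← mul_assoc, hsv, one_mul]

lemma one_add_x₁ : (1 : Y) + x₁ = vv := by
  have h : s * ((1:Y) + x₁) = s * vv := by
    rw [mul_add, mul_one, s_x₁, hsv, s, yy]; ring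
  have hs : s ≠ 0 := by
    intro h0
    have := constCoeff_s
    rw [show (1 - PowerSeries.X : Y) = s from rfl, h0] at this
    simp at this
  exact mul_left_cancel₀ hs h

lemma key_pow (a : ℕ) : s ^ a * vv ^ (a + 1) = vv := by
  rw [s, ← sU_val, vv, ← Units.val_pow_eq_pow_val, ← Units.val_pow_eq_pow_val, ← Units.val_mul]
  congr 1
  group

lemma key_pow' (a : ℕ) : s ^ a * vv ^ a = 1 := by
  rw [s, ← sU_val, vv, ← Units.val_pow_eq_pow_val, ← Units.val_pow_eq_pow_val, ← Units.val_mul]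
  rw [← Units.val_one]
  congr 1
  group

def u' (a : ℕ) : Tp := Polynomial.C (yy * s ^ a) * (1 + Polynomial.X) ^ (a + 1)
def A' (a : ℕ) : Tp := (1 - (a : Tp) * Polynomial.X) * Polynomial.C (s ^ (a + 1))
def D' : Tp := Polynomial.C s * Polynomial.X - Polynomial.C yy

lemma root1 (a : ℕ) : (Polynomial.X - u' a).eval x₁ = 0 := by
  simp only [u', Polynomial.eval_sub, Polynomial.eval_X, Polynomial.eval_mul, Polynomial.eval_C,
    Polynomial.eval_pow, Polynomial.eval_add, Polynomial.eval_one]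
  rw [one_add_x₁]
  have : yy * s ^ a * vv ^ (a + 1) = x₁ := by
    rw [mul_assoc, key_pow, x₁]; ring
  rw [this, sub_self]

lemma hD'fac : D' = Polynomial.C (s : Y) * (Polynomial.X - Polynomial.C x₁) := by
  rw [D', mul_sub, ← Polynomial.C_mul, s_x₁]

lemma exists_QG (a : ℕ) : ∃ Q' G' : Tp,
    D' * Q' = Polynomial.X - u' a ∧
    A' a * Polynomial.X = Polynomial.C (yy * s ^ a) * Q' + D' * G' ∧
    Polynomial.mapRingHom (PowerSeries.constantCoeff (R := ℚ)) Q' = 1 ∧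
    Polynomial.evalRingHom (0 : Y) Q' = s ^ a ∧
    Polynomial.evalRingHom (0 : Y) G' = s ^ a * s ^ a := by
  obtain ⟨Q₁, hQ₁⟩ := (Polynomial.dvd_iff_isRoot.mpr (root1 a))
  -- hQ₁ : Polynomial.X - u' a = (Polynomial.X - Polynomial.C x₁) * Q₁
  set Q' : Tp := Polynomial.C vv * Q₁ with hQ'def
  have hDQ : D' * Q' = Polynomial.X - u' a := by
    rw [hQ'def, hD'fac, hQ₁]
    rw [show Polynomial.C (s:Y) * (Polynomial.X - Polynomial.C x₁) * (Polynomial.C vv * Q₁)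
        = (Polynomial.C s * Polynomial.C vv) * ((Polynomial.X - Polynomial.C x₁) * Q₁) by ring]
    rw [← Polynomial.C_mul, hsv, Polynomial.C_1, one_mul]
  -- derivative evaluation
  have hder : (Polynomial.derivative (Polynomial.X - u' a)).eval x₁ = 1 - ((a:Y)+1) * yy := by
    simp only [u', Polynomial.derivative_sub, Polynomial.derivative_X, Polynomial.derivative_C_mul,
      Polynomial.derivative_pow, Polynomial.derivative_add, Polynomial.derivative_one,
      Polynomial.derivative_X, Nat.add_sub_cancel, zero_add, mul_one]
    simp only [Polynomial.eval_sub, Polynomial.eval_one, Polynomial.eval_mul, Polynomial.eval_C,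
      Polynomial.eval_natCast, Polynomial.eval_pow, Polynomial.eval_add, Polynomial.eval_X]
    rw [one_add_x₁]
    push_cast
    have h2 : yy * s ^ a * (((a:Y)+1) * vv ^ a) = ((a:Y)+1) * yy * (s ^ a * vv ^ a) := by ring
    rw [h2, key_pow' a, mul_one]
  have hQ₁root : Q₁.eval x₁ = 1 - ((a:Y)+1) * yy := by
    have h2 : Polynomial.eval x₁ (Polynomial.derivative ((Polynomial.X - Polynomial.C x₁) * Q₁))
        = Q₁.eval x₁ := by
      simp [Polynomial.derivative_mul]
    have h := congrArg (fun p => Polynomial.eval x₁ (Polynomial.derivative p)) hQ₁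
    rw [hder, h2] at h
    exact h.symm
  -- Bezout root
  have root2 : (A' a * Polynomial.X - Polynomial.C (yy * s ^ a) * Q').eval x₁ = 0 := by
    simp only [A', hQ'def, Polynomial.eval_sub, Polynomial.eval_mul, Polynomial.eval_C,
      Polynomial.eval_X, Polynomial.eval_one, Polynomial.eval_natCast, Polynomial.eval_pow,
      Polynomial.eval_add]
    rw [hQ₁root]
    rw [x₁, pow_succ]
    have hv := hsv
    have hsyy : s = 1 - yy := rfl
    linear_combination (-(a:Y) * s^a * yy^2 * vv) * hv + (vv*yy*s^a) * hsyy
  obtain ⟨G₁, hG₁⟩ := (Polynomial.dvd_iff_isRoot.mpr root2)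
  set G' : Tp := Polynomial.C vv * G₁ with hG'def
  have hDG : D' * G' = (Polynomial.X - Polynomial.C x₁) * G₁ := by
    rw [hG'def, hD'fac]
    rw [show Polynomial.C (s:Y) * (Polynomial.X - Polynomial.C x₁) * (Polynomial.C vv * G₁)
        = (Polynomial.C s * Polynomial.C vv) * ((Polynomial.X - Polynomial.C x₁) * G₁) by ring]
    rw [← Polynomial.C_mul, hsv, Polynomial.C_1, one_mul]
  have hBez : A' a * Polynomial.X = Polynomial.C (yy * s ^ a) * Q' + D' * G' := by
    rw [hDG, ← hG₁]; ring
  -- pi evaluation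
  have hyy0 : PowerSeries.constantCoeff (R := ℚ) yy = 0 := by rw [yy]; simp
  have hπD : Polynomial.mapRingHom (PowerSeries.constantCoeff (R := ℚ)) D' = Polynomial.X := by
    simp [D', constCoeff_s, hyy0, s]
  have hπP : Polynomial.mapRingHom (PowerSeries.constantCoeff (R := ℚ)) (Polynomial.X - u' a)
      = Polynomial.X := by
    simp [u', hyy0]
  have hπQ : Polynomial.mapRingHom (PowerSeries.constantCoeff (R := ℚ)) Q' = 1 := by
    have h := congrArg (Polynomial.mapRingHom (PowerSeries.constantCoeff (R := ℚ))) hDQ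
    rw [map_mul, hπD, hπP] at h
    have hx : (Polynomial.X : P) ≠ 0 := Polynomial.X_ne_zero
    have := mul_left_cancel₀ hx (h.trans (mul_one Polynomial.X).symm)
    exact this
  -- eval at 0
  have hyne : yy ≠ 0 := PowerSeries.X_ne_zero
  have he₀D : Polynomial.evalRingHom (0 : Y) D' = -yy := by
    simp [D']
  have he₀P : Polynomial.evalRingHom (0 : Y) (Polynomial.X - u' a) = -(yy * s ^ a) := by
    simp [u']
  have he₀Q : Polynomial.evalRingHom (0 : Y) Q' = s ^ a := by
    have h := congrArg (Polynomial.evalRingHom (0 : Y)) hDQ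
    rw [map_mul, he₀D, he₀P] at h
    have h2 : yy * (Polynomial.evalRingHom (0:Y) Q') = yy * s ^ a := by
      rw [neg_mul, neg_inj] at h
      exact h
    exact mul_left_cancel₀ hyne h2
  have he₀G : Polynomial.evalRingHom (0 : Y) G' = s ^ a * s ^ a := by
    have h := congrArg (Polynomial.evalRingHom (0 : Y)) hBez
    simp only [map_mul, map_add] at h
    rw [he₀D, he₀Q] at h
    have hX0 : Polynomial.evalRingHom (0:Y) (Polynomial.X : Tp) = 0 := by simp
    have hCy : Polynomial.evalRingHom (0:Y) (Polynomial.C yy : Tp) = yy := by simp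
    have hCs : Polynomial.evalRingHom (0:Y) (Polynomial.C (s ^ a) : Tp) = s ^ a := by simp
    rw [hX0, hCy, hCs, mul_zero] at h
    have h2 : yy * (Polynomial.evalRingHom (0:Y) G') = yy * (s ^ a * s ^ a) := by
      linear_combination h
    exact mul_left_cancel₀ hyne h2
  exact ⟨Q', G', hDQ, hBez, hπQ, he₀Q, he₀G⟩


/-- coefficient of (1 - X)^N in a power series ring -/
lemma coeff_one_sub_pow {R : Type*} [CommRing R] (N k : ℕ) :
    PowerSeries.coeff (R := R) k ((1 - PowerSeries.X) ^ N) = (-1 : R) ^ k * (N.choose k : R) := by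
  have h : ((1 : PowerSeries R) - PowerSeries.X) ^ N
      = ∑ m ∈ range (N + 1), PowerSeries.C (R := R) ((-1) ^ m * (N.choose m : R)) * PowerSeries.X ^ m := by
    rw [show ((1 : PowerSeries R) - PowerSeries.X) = -PowerSeries.X + 1 by ring, add_pow]
    refine Finset.sum_congr rfl fun m hm => ?_
    rw [one_pow, mul_one, neg_pow]
    rw [map_mul, map_pow, map_neg, map_one, map_natCast]
    ring
  rw [h, map_sum]
  simp only [PowerSeries.coeff_C_mul, PowerSeries.coeff_X_pow, mul_ite, mul_one, mul_zero]
  rw [Finset.sum_ite_eq (range (N + 1)) k fun m => (-1 : R) ^ m * (N.choose m : R)]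
  by_cases hk : k ∈ range (N + 1)
  · rw [if_pos hk]
  · rw [if_neg hk]
    have : N < k := by simpa using hk
    rw [Nat.choose_eq_zero_of_lt this]
    simp


lemma F_num (a k : ℕ) :
    ((((a+1)*(k+1)+1).choose (k+1) : ℚ))
      = ((a+1 : ℚ)*((k:ℚ)+1)+1) * (((((a+1)*(k+1)).choose (k+1) : ℚ)) - (a:ℚ) * ((((a+1)*(k+1)).choose k : ℚ))) := by
  set N := (a+1)*(k+1) with hN
  have h1 : (N+1).choose (k+1) = N.choose k + N.choose (k+1) := Nat.choose_succ_succ N k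
  have hNe : N = a*k+a+k+1 := by rw [hN]; ring
  have hsub : N - k = a*k + a + 1 := by omega
  have h3 : (N.choose (k+1)) * (k+1) = N.choose k * (a*k+a+1) := by
    rw [Nat.choose_succ_right_eq N k, hsub]
  have h2 : (N.choose (k+1) : ℚ) * ((k:ℚ)+1) = (N.choose k : ℚ) * ((a:ℚ)*k+a+1) := by
    exact_mod_cast congrArg (Nat.cast : ℕ → ℚ) h3
  have hk1 : ((k:ℚ)+1) ≠ 0 := by positivity
  apply mul_right_cancel₀ hk1
  rw [h1]
  push_cast
  linear_combination (-(((a:ℚ)+1)*((k:ℚ)+1))) * h2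

lemma coeff_F (a i : ℕ) :
    (1 / ((a + 1 : ℚ) * (i:ℚ) + 1)) * ((((a+1) * i + 1).choose i : ℚ))
      = ((1 - (a : P) * Polynomial.X) * (1 + Polynomial.X) ^ ((a + 1) * i)).coeff i := by
  rw [sub_mul, one_mul, Polynomial.coeff_sub, ← Polynomial.C_eq_natCast, mul_assoc,
    Polynomial.coeff_C_mul]
  cases i with
  | zero => simp
  | succ k =>
    rw [Polynomial.coeff_X_mul, Polynomial.coeff_one_add_X_pow, Polynomial.coeff_one_add_X_pow]
    have hne : ((a+1:ℚ))*((k:ℚ)+1)+1 ≠ 0 := by positivity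
    rw [div_mul_eq_mul_div, one_mul, div_eq_iff (by push_cast; exact hne)]
    rw [F_num a k]
    push_cast
    ring



abbrev T : Type := PowerSeries P

def rh : Y →+* T := PowerSeries.map (Polynomial.C : ℚ →+* P)
def xh : T := PowerSeries.C (R := P) Polynomial.X
def phih : Tp →+* T := Polynomial.eval₂RingHom rh xh
def epsh : T →+* Y := PowerSeries.map (Polynomial.evalRingHom (0:ℚ))

lemma phi_C (c : Y) : phih (Polynomial.C c) = rh c := by
  simp [phih, Polynomial.coe_eval₂RingHom]

lemma phi_X : phih Polynomial.X = xh := by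
  simp [phih, Polynomial.coe_eval₂RingHom]

lemma rh_yy : rh yy = PowerSeries.X := by
  rw [yy, rh, PowerSeries.map_X]

lemma eps_phi : epsh.comp phih = Polynomial.evalRingHom (0 : Y) := by
  apply Polynomial.ringHom_ext
  · intro c
    simp only [RingHom.comp_apply, phi_C]
    have h : epsh (rh c) = c := by
      ext k
      simp [epsh, rh, PowerSeries.coeff_map]
    rw [h]
    simp
  · simp only [RingHom.comp_apply, phi_X]
    have h : epsh xh = 0 := by
      ext k
      rw [epsh, xh, PowerSeries.coeff_map, PowerSeries.coeff_C]
      split_ifs <;> simp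
    rw [h]
    simp

lemma const_phi : (PowerSeries.constantCoeff (R := P)).comp phih
    = Polynomial.mapRingHom (PowerSeries.constantCoeff (R := ℚ)) := by
  apply Polynomial.ringHom_ext
  · intro c
    simp only [RingHom.comp_apply, phi_C]
    rw [← PowerSeries.coeff_zero_eq_constantCoeff_apply, rh, PowerSeries.coeff_map,
      PowerSeries.coeff_zero_eq_constantCoeff_apply]
    simp
  · simp only [RingHom.comp_apply, phi_X]
    rw [xh]
    simp


lemma cancel (m : ℕ) (z w : T)
    (h : z * (xh - PowerSeries.X * (1 + xh)) = PowerSeries.X ^ (m+1) * w) :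
    ∀ k, k ≤ m → PowerSeries.coeff (R := P) k z = 0 := by
  have key : ∀ k, k ≤ m → PowerSeries.coeff (R := P) k z * Polynomial.X
      - (if k = 0 then 0 else (PowerSeries.coeff (R := P) (k-1) z) * (1 + Polynomial.X)) = 0 := by
    intro k hk
    have h1 : PowerSeries.coeff (R := P) k (z * (xh - PowerSeries.X * (1 + xh)))
        = PowerSeries.coeff (R := P) k z * Polynomial.X
          - (if k = 0 then 0 else (PowerSeries.coeff (R := P) (k-1) z) * (1 + Polynomial.X)) := by
      have hsplit : z * (xh - PowerSeries.X * (1 + xh))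
          = z * xh - PowerSeries.X ^ 1 * (z * (1 + xh)) := by ring
      rw [hsplit, map_sub]
      congr 1
      · rw [xh, PowerSeries.coeff_mul_C]
      · rw [PowerSeries.coeff_X_pow_mul']
        by_cases hk0 : k = 0
        · subst hk0; simp
        · rw [if_pos (by omega : 1 ≤ k), if_neg hk0]
          have hC : (1 : T) + xh = PowerSeries.C (R := P) (1 + Polynomial.X) := by
            rw [map_add, map_one, xh]
          rw [hC, PowerSeries.coeff_mul_C]
    have h2 : PowerSeries.coeff (R := P) k (PowerSeries.X ^ (m+1) * w) = 0 := by
      rw [PowerSeries.coeff_X_pow_mul', if_neg (by omega)]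
    rw [← h1, h, h2]
  intro k
  induction k with
  | zero =>
    intro hk
    have h0 := key 0 hk
    rw [if_pos rfl, sub_zero] at h0
    exact (mul_eq_zero.mp h0).resolve_right Polynomial.X_ne_zero
  | succ k ih =>
    intro hk
    have h0 := key (k+1) hk
    rw [if_neg (Nat.succ_ne_zero k), Nat.add_sub_cancel, ih (by omega), zero_mul, sub_zero] at h0
    exact (mul_eq_zero.mp h0).resolve_right Polynomial.X_ne_zero

theorem aux (a n : ℕ) :
    ∑ i ∈ Finset.range (n + 1),
      (-1 : ℚ) ^ (n - i) * ((((a+1) - 1) * i + (a+1)).choose (n - i)) *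
        ((1 : ℚ) / ((a+1) * i + 1)) * (((a+1) * i + 1).choose i)
      = (-1 : ℚ) ^ n * (((a+1) - 1).choose n) := by
  obtain ⟨Q', G', hDQ, hBez, hpiQ, heQ, heG⟩ := exists_QG a
  set q : T := phih Q' with hqdef
  set Gh : T := phih G' with hGdef
  set u : T := rh (yy * s ^ a) * (1 + xh) ^ (a+1) with hudef
  set v : T := PowerSeries.X * (1 + xh) with hvdef
  set Dh : T := xh - v with hDhdef
  have hrs : rh s = 1 - PowerSeries.X := by
    rw [s, map_sub, map_one, rh, PowerSeries.map_X]
  have hphiD : phih D' = Dh := by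
    rw [D', map_sub, map_mul, phi_C, phi_C, phi_X, hDhdef, hvdef, hrs, rh_yy]
    ring
  have hphiu : phih (u' a) = u := by
    rw [u', map_mul, map_pow, map_add, map_one, phi_C, phi_X, hudef]
  have hDQ_T : Dh * q = xh - u := by
    have h := congrArg phih hDQ
    rw [map_mul, hphiD, map_sub, phi_X, hphiu] at h
    exact h
  have hphiA : phih (A' a) = (1 - (a:T) * xh) * rh (s ^ (a+1)) := by
    rw [A', map_mul, map_sub, map_one, map_mul, map_natCast, phi_X, phi_C]
  have hBez_T : phih (A' a) * xh = rh (yy * s ^ a) * q + Dh * Gh := by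
    have h := congrArg phih hBez
    rw [map_mul phih, map_add phih, map_mul phih, map_mul phih, phi_X, phi_C, hphiD] at h
    exact h
  -- q is a unit
  have hqc : PowerSeries.constantCoeff (R := P) q = 1 := by
    have h := RingHom.congr_fun const_phi Q'
    simp only [RingHom.comp_apply] at h
    rw [← hqdef] at h
    rw [h, hpiQ]
  have hqU : IsUnit q := PowerSeries.isUnit_iff_constantCoeff.mpr
    (by rw [hqc]; exact isUnit_one)
  obtain ⟨qU, hq⟩ := hqU
  have hinv : q * ((qU⁻¹ : Tˣ) : T) = 1 := by
    rw [← hq]; exact Units.mul_inv _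
  have hinv' : ((qU⁻¹ : Tˣ) : T) * q = 1 := by
    rw [← hq]; exact Units.inv_mul _
  -- eps values
  have heps_q : epsh q = s ^ a := by
    have h := RingHom.congr_fun eps_phi Q'
    simp only [RingHom.comp_apply] at h
    rw [← hqdef] at h
    rw [h, heQ]
  have heps_G : epsh Gh = s ^ a * s ^ a := by
    have h := RingHom.congr_fun eps_phi G'
    simp only [RingHom.comp_apply] at h
    rw [← hGdef] at h
    rw [h, heG]
  -- geometric sums
  set σ : T := ∑ i ∈ range (n+1), u ^ i * xh ^ (n - i) with hsdef
  set σ' : T := ∑ i ∈ range (n+1), v ^ i * xh ^ (n - i) with hs'def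
  have hgeo1 : σ * (u - xh) = u ^ (n+1) - xh ^ (n+1) := by
    rw [hsdef]
    have h := geom_sum₂_mul u xh (n+1)
    simpa only [Nat.add_sub_cancel] using h
  have hgeo2 : σ' * (v - xh) = v ^ (n+1) - xh ^ (n+1) := by
    rw [hs'def]
    have h := geom_sum₂_mul v xh (n+1)
    simpa only [Nat.add_sub_cancel] using h
  have e2 : σ' * Dh = xh^(n+1) - v^(n+1) := by
    rw [hDhdef]
    linear_combination -hgeo2
  have hDd : (σ * q - σ') * Dh = v^(n+1) - u^(n+1) := by
    have e1 : σ * q * Dh = xh^(n+1) - u^(n+1) := by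
      have h : σ * q * Dh = σ * (Dh * q) := by ring
      rw [h, hDQ_T]
      linear_combination -hgeo1
    linear_combination e1 - e2
  have hzero : ∀ k, k ≤ n → PowerSeries.coeff (R := P) k (σ * q - σ') = 0 := by
    apply cancel n (σ * q - σ')
      ((1+xh)^(n+1) - rh (s^(a*(n+1))) * (1+xh)^((a+1)*(n+1)))
    have hv1 : v^(n+1) = PowerSeries.X^(n+1) * (1+xh)^(n+1) := by
      rw [hvdef, mul_pow]
    have hu1 : u^(n+1)
        = PowerSeries.X^(n+1) * (rh (s^(a*(n+1))) * (1+xh)^((a+1)*(n+1))) := by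
      rw [hudef, mul_pow, ← map_pow, mul_pow, ← pow_mul s, ← pow_mul (1+xh), map_mul,
        map_pow, rh_yy]
      ring
    have hDh2 : xh - PowerSeries.X * (1 + xh) = Dh := by rw [hDhdef, hvdef]
    rw [hDh2, hDd, hv1, hu1]
    ring
  have hAs : PowerSeries.coeff (R := P) n (phih (A' a) * σ)
      = PowerSeries.coeff (R := P) n (phih (A' a) * σ' * ((qU⁻¹ : Tˣ) : T)) := by
    have hdiff : phih (A' a) * σ - phih (A' a) * σ' * ((qU⁻¹ : Tˣ) : T)
        = (phih (A' a) * ((qU⁻¹ : Tˣ) : T)) * (σ * q - σ') := by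
      linear_combination (-(phih (A' a) * σ)) * hinv
    have hcoeff : PowerSeries.coeff (R := P) n
        ((phih (A' a) * ((qU⁻¹ : Tˣ) : T)) * (σ * q - σ')) = 0 := by
      rw [PowerSeries.coeff_mul]
      apply Finset.sum_eq_zero
      intro p hp
      have hple : p.2 ≤ n := by
        have := Finset.HasAntidiagonal.mem_antidiagonal.mp hp; omega
      rw [hzero p.2 hple, mul_zero]
    have h := congrArg (PowerSeries.coeff (R := P) n) hdiff
    rw [map_sub, hcoeff] at h
    exact sub_eq_zero.mp h
  have hE : xh * (phih (A' a) * σ' * ((qU⁻¹ : Tˣ) : T))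
      = rh (yy * s^a) * σ'
        + (Gh * ((qU⁻¹ : Tˣ) : T)) * (xh^(n+1) - v^(n+1)) := by
    linear_combination (σ' * ((qU⁻¹ : Tˣ) : T)) * hBez_T
      + (rh (yy*s^a) * σ') * hinv + (Gh * ((qU⁻¹ : Tˣ) : T)) * e2
  have hL : Polynomial.coeff (PowerSeries.coeff (R := P) n
        (xh * (phih (A' a) * σ' * ((qU⁻¹ : Tˣ) : T)))) (n+1)
      = Polynomial.coeff (PowerSeries.coeff (R := P) n
        (phih (A' a) * σ' * ((qU⁻¹ : Tˣ) : T))) n := by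
    rw [xh, PowerSeries.coeff_C_mul, Polynomial.coeff_X_mul]
  have hterm : ∀ i, v ^ i * xh ^ (n - i)
      = PowerSeries.X ^ i * PowerSeries.C (R := P) ((1+Polynomial.X)^i * Polynomial.X^(n-i)) := by
    intro i
    rw [hvdef, mul_pow, map_mul, map_pow, map_pow, map_add, map_one, xh]
    ring
  have hs'deg : ∀ k, Polynomial.coeff (PowerSeries.coeff (R := P) k σ') (n+1) = 0 := by
    intro k
    rw [hs'def, map_sum, Polynomial.finset_sum_coeff]
    apply Finset.sum_eq_zero
    intro i hi
    have hin : i ≤ n := by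
      have := Finset.mem_range.mp hi; omega
    rw [hterm i, PowerSeries.coeff_X_pow_mul']
    split_ifs with h1
    · rw [PowerSeries.coeff_C]
      split_ifs with h2
      · apply Polynomial.coeff_eq_zero_of_natDegree_lt
        have hd1 : ((1+Polynomial.X : P)^i).natDegree ≤ i := by
          refine le_trans (Polynomial.natDegree_pow_le) ?_
          have hb : (1+Polynomial.X : P).natDegree ≤ 1 :=
            le_trans (Polynomial.natDegree_add_le _ _) (by simp)
          calc i * (1+Polynomial.X : P).natDegree ≤ i * 1 := Nat.mul_le_mul_left i hb
          _ = i := Nat.mul_one i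
        have hd2 : ((1+Polynomial.X:P)^i * Polynomial.X^(n-i)).natDegree ≤ i + (n-i) := by
          refine le_trans (Polynomial.natDegree_mul_le) ?_
          have hx := Polynomial.natDegree_X_pow (R := ℚ) (n - i)
          omega
        omega
      · simp
    · simp
  have ht1 : Polynomial.coeff (PowerSeries.coeff (R := P) n (rh (yy * s^a) * σ')) (n+1) = 0 := by
    rw [PowerSeries.coeff_mul, Polynomial.finset_sum_coeff]
    apply Finset.sum_eq_zero
    intro p _
    rw [rh, PowerSeries.coeff_map, Polynomial.coeff_C_mul, hs'deg p.2, mul_zero]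
  have hxhp : xh^(n+1) = PowerSeries.C (R := P) (Polynomial.X^(n+1)) := by rw [xh, map_pow]
  have ht2 : Polynomial.coeff (PowerSeries.coeff (R := P) n
        ((Gh * ((qU⁻¹ : Tˣ) : T)) * xh^(n+1))) (n+1)
      = PowerSeries.coeff (R := ℚ) n (epsh (Gh * ((qU⁻¹ : Tˣ) : T))) := by
    rw [hxhp, PowerSeries.coeff_mul_C]
    have h := Polynomial.coeff_mul_X_pow
      (PowerSeries.coeff (R := P) n (Gh * ((qU⁻¹ : Tˣ) : T))) (n+1) 0
    rw [zero_add] at h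
    rw [h, epsh, PowerSeries.coeff_map]
    simp [Polynomial.coeff_zero_eq_eval_zero]
  have hsne : (s : Y) ≠ 0 := by
    intro h0
    have hc := constCoeff_s
    rw [show (1 - PowerSeries.X : Y) = s from rfl, h0] at hc
    simp at hc
  have hepsW : epsh (Gh * ((qU⁻¹ : Tˣ) : T)) = s ^ a := by
    have hne : (s : Y) ^ a ≠ 0 := pow_ne_zero _ hsne
    apply mul_right_cancel₀ hne
    calc epsh (Gh * ((qU⁻¹ : Tˣ) : T)) * s^a
        = epsh (Gh * ((qU⁻¹ : Tˣ) : T)) * epsh q := by rw [heps_q]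
      _ = epsh (Gh * (((qU⁻¹ : Tˣ) : T) * q)) := by rw [map_mul, map_mul, map_mul]; ring
      _ = epsh Gh := by rw [hinv', mul_one]
      _ = s^a * s^a := heps_G
  have hcoeff_sa : PowerSeries.coeff (R := ℚ) n (s ^ a) = (-1:ℚ)^n * (a.choose n) := by
    rw [show (s:Y) = 1 - PowerSeries.X from rfl]
    exact coeff_one_sub_pow a n
  have ht3 : PowerSeries.coeff (R := P) n ((Gh * ((qU⁻¹ : Tˣ) : T)) * v^(n+1)) = 0 := by
    have h : (Gh * ((qU⁻¹ : Tˣ) : T)) * v^(n+1)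
        = PowerSeries.X^(n+1) * ((Gh * ((qU⁻¹ : Tˣ) : T)) * (1+xh)^(n+1)) := by
      rw [hvdef, mul_pow]; ring
    rw [h, PowerSeries.coeff_X_pow_mul', if_neg (by omega)]
  have hfinal : Polynomial.coeff (PowerSeries.coeff (R := P) n (phih (A' a) * σ)) n
      = (-1:ℚ)^n * (a.choose n) := by
    rw [hAs, ← hL]
    have h := congrArg (fun t => Polynomial.coeff (PowerSeries.coeff (R := P) n t) (n+1)) hE
    rw [h]
    rw [show rh (yy*s^a)*σ'
          + (Gh * ((qU⁻¹ : Tˣ) : T))*(xh^(n+1) - v^(n+1))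
        = rh (yy*s^a)*σ' + ((Gh * ((qU⁻¹ : Tˣ) : T))*xh^(n+1)
          - (Gh * ((qU⁻¹ : Tˣ) : T))*v^(n+1)) from by ring]
    rw [map_add, map_sub, ht3, sub_zero, Polynomial.coeff_add, ht1, zero_add, ht2,
      hepsW, hcoeff_sa]
  -- Step 1: expansion of the coefficient as the statement sum
  have hexp : PowerSeries.coeff (R := P) n (phih (A' a) * σ)
      = ∑ i ∈ range (n+1), Polynomial.C ((-1:ℚ)^(n-i) * (((a*i+(a+1)).choose (n-i) : ℕ) : ℚ))
          * ((1 - (a:P)*Polynomial.X) * (1+Polynomial.X)^((a+1)*i) * Polynomial.X^(n-i)) := by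
    rw [hsdef, Finset.mul_sum, map_sum]
    apply Finset.sum_congr rfl
    intro i hi
    have hin : i ≤ n := by
      have := Finset.mem_range.mp hi; omega
    have hui : u ^ i = rh ((yy*s^a)^i) * (1+xh)^((a+1)*i) := by
      rw [hudef, mul_pow, ← pow_mul, map_pow]
    have c1 : PowerSeries.C (R := P) ((1 - (a:P)*Polynomial.X) * (1+Polynomial.X)^((a+1)*i)
          * Polynomial.X^(n-i))
        = (1 - (a:T)*xh) * (1+xh)^((a+1)*i) * xh^(n-i) := by
      rw [map_mul, map_mul, map_pow, map_pow, map_sub, map_one, map_mul, map_natCast,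
        map_add, map_one, xh]
    have c2 : rh (yy^i * s^(a*i+(a+1))) = rh ((yy*s^a)^i) * rh (s^(a+1)) := by
      rw [← map_mul]
      congr 1
      rw [mul_pow, ← pow_mul, pow_add]
      ring
    have hprod : phih (A' a) * (u^i * xh^(n-i))
        = PowerSeries.C (R := P) ((1 - (a:P)*Polynomial.X) * (1+Polynomial.X)^((a+1)*i)
            * Polynomial.X^(n-i))
          * rh (yy^i * s^(a*i+(a+1))) := by
      rw [hphiA, hui, c1, c2]
      ring
    rw [hprod, PowerSeries.coeff_C_mul, rh, PowerSeries.coeff_map]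
    have hyc : PowerSeries.coeff (R := ℚ) n (yy^i * s^(a*i+(a+1)))
        = (-1:ℚ)^(n-i) * (((a*i+(a+1)).choose (n-i) : ℕ) : ℚ) := by
      rw [show (yy:Y) = PowerSeries.X from rfl, PowerSeries.coeff_X_pow_mul',
        if_pos (by omega : i ≤ n), show (s:Y) = 1 - PowerSeries.X from rfl]
      exact coeff_one_sub_pow _ _
    rw [hyc]
    ring
  have hcoeffsum : Polynomial.coeff (PowerSeries.coeff (R := P) n (phih (A' a) * σ)) n
      = ∑ i ∈ range (n+1), ((-1:ℚ)^(n-i) * (((a*i+(a+1)).choose (n-i) : ℕ) : ℚ))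
          * Polynomial.coeff ((1 - (a:P)*Polynomial.X) * (1+Polynomial.X)^((a+1)*i)) i := by
    rw [hexp, Polynomial.finset_sum_coeff]
    apply Finset.sum_congr rfl
    intro i hi
    have hin : i ≤ n := by
      have := Finset.mem_range.mp hi; omega
    rw [Polynomial.coeff_C_mul]
    congr 1
    have h := Polynomial.coeff_mul_X_pow
      ((1 - (a:P)*Polynomial.X) * (1+Polynomial.X)^((a+1)*i)) (n-i) i
    rw [show i + (n-i) = n from by omega] at h
    exact h
  -- chain everything
  have hstep : ∑ i ∈ Finset.range (n + 1),
      (-1 : ℚ) ^ (n - i) * ((((a+1) - 1) * i + (a+1)).choose (n - i)) *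
        ((1 : ℚ) / ((a+1) * i + 1)) * (((a+1) * i + 1).choose i)
      = ∑ i ∈ range (n+1), ((-1:ℚ)^(n-i) * (((a*i+(a+1)).choose (n-i) : ℕ) : ℚ))
          * Polynomial.coeff ((1 - (a:P)*Polynomial.X) * (1+Polynomial.X)^((a+1)*i)) i := by
    apply Finset.sum_congr rfl
    intro i hi
    rw [Nat.add_sub_cancel, ← coeff_F a i]
    ring
  rw [hstep, ← hcoeffsum, hfinal]
  norm_num [Nat.add_sub_cancel]

end
end Stmt16Aux

theorem stmt_16 (n β : ℕ) (hβ : 0 < β) :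
    ∑ i ∈ Finset.range (n + 1),
      (-1 : ℚ) ^ (n - i) * (((β - 1) * i + β).choose (n - i)) *
        ((1 : ℚ) / (β * i + 1)) * ((β * i + 1).choose i)
      = (-1 : ℚ) ^ n * ((β - 1).choose n) := by
  obtain ⟨a, rfl⟩ : ∃ a, β = a + 1 := ⟨β - 1, by omega⟩
  have h := Stmt16Aux.aux a n
  push_cast at h ⊢
  exact h
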